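/- Let b be a Schur-class L(J,K)-valued multiplier on 𝔹^d and X : H(b)^d → H(b) a row contraction on the de Branges–Rovnyak space H(b). Then X solves the Gleason problem (z₁(X₁*f)(z) + ... + z_d(X_d*f)(z) = f(z) - f(0) for all f ∈ H(b)) if and only if (I - Xz*)^{-1}k₀^b = k_z^b for all z ∈ 𝔹^d. -/

import Mathlib

open ContinuousLinearMap

set_option synthInstance.maxHeartbeats 1000000
set_option maxHeartbeats 1000000

noncomputable section

instance piLpComplete {d : ℕ} {H : Type*} [NormedAddCommGroup H]
    [InnerProductSpace ℂ H] [CompleteSpace H] :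
    CompleteSpace (PiLp 2 fun _ : Fin d => H) :=
  inferInstance

/-- The row operator `z : H^d → H`, `(h₁,...,h_d) ↦ Σ zⱼ hⱼ`, for a scalar row `z ∈ ℂ^d`. -/
def rowOp {d : ℕ} {H : Type*} [NormedAddCommGroup H] [InnerProductSpace ℂ H]
    (z : EuclideanSpace ℂ (Fin d)) : PiLp 2 (fun _ : Fin d => H) →L[ℂ] H :=
  ∑ j, z j • ((ContinuousLinearMap.proj j : (∀ _ : Fin d, H) →L[ℂ] H).comp
    (PiLp.continuousLinearEquiv 2 ℂ (fun _ : Fin d => H)).toContinuousLinearMap)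

/-- The column operator `z* : H → H^d`, `h ↦ (z̄₁ h, ..., z̄_d h)`; the adjoint of `rowOp z`. -/
def colOp {d : ℕ} {H : Type*} [NormedAddCommGroup H] [InnerProductSpace ℂ H]
    (z : EuclideanSpace ℂ (Fin d)) : H →L[ℂ] PiLp 2 (fun _ : Fin d => H) :=
  ((PiLp.continuousLinearEquiv 2 ℂ (fun _ : Fin d => H)).symm.toContinuousLinearMap).comp
    (ContinuousLinearMap.pi fun j => (starRingEnd ℂ (z j)) • ContinuousLinearMap.id ℂ H)

/-- Ampliation `A ⊗ I_d` of an operator `A : H → J` acting componentwise on columns. -/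
def liftD {d : ℕ} {H J : Type*} [NormedAddCommGroup H] [InnerProductSpace ℂ H]
    [NormedAddCommGroup J] [InnerProductSpace ℂ J] (A : H →L[ℂ] J) :
    PiLp 2 (fun _ : Fin d => H) →L[ℂ] PiLp 2 (fun _ : Fin d => J) :=
  ((PiLp.continuousLinearEquiv 2 ℂ (fun _ : Fin d => J)).symm.toContinuousLinearMap).comp <|
    (ContinuousLinearMap.pi fun j =>
      A.comp ((ContinuousLinearMap.proj j : (∀ _ : Fin d, H) →L[ℂ] H))).comp
    (PiLp.continuousLinearEquiv 2 ℂ (fun _ : Fin d => H)).toContinuousLinearMap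

open scoped InnerProductSpace

section helpers

variable {d : ℕ} {H : Type*} [NormedAddCommGroup H] [InnerProductSpace ℂ H]

lemma rowOp_apply (z : EuclideanSpace ℂ (Fin d)) (g : PiLp 2 fun _ : Fin d => H) :
    rowOp z g = ∑ j, z j • g j := by
  simp [rowOp, ContinuousLinearMap.sum_apply]

lemma colOp_apply (z : EuclideanSpace ℂ (Fin d)) (h : H) (j : Fin d) :
    colOp z h j = (starRingEnd ℂ (z j)) • h := rfl

lemma norm_colOp_le (z : EuclideanSpace ℂ (Fin d)) : ‖colOp (H := H) z‖ ≤ ‖z‖ := by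
  refine ContinuousLinearMap.opNorm_le_bound _ (norm_nonneg z) fun h => ?_
  have hnorm : ∀ j, ‖colOp z h j‖ = ‖z j‖ * ‖h‖ := by
    intro j; rw [colOp_apply, norm_smul]; simp
  calc ‖colOp z h‖ = Real.sqrt (∑ j, ‖colOp z h j‖ ^ 2) := by
        rw [PiLp.norm_eq_of_L2]
    _ = Real.sqrt (∑ j, ‖z j‖ ^ 2 * ‖h‖ ^ 2) := by
        congr 1
        refine Finset.sum_congr rfl fun j _ => ?_
        rw [hnorm j, mul_pow]
    _ = Real.sqrt (∑ j, ‖z j‖ ^ 2) * ‖h‖ := by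
        rw [← Finset.sum_mul, Real.sqrt_mul
          (Finset.sum_nonneg fun j _ => sq_nonneg _), Real.sqrt_sq (norm_nonneg h)]
    _ = ‖z‖ * ‖h‖ := by rw [EuclideanSpace.norm_eq]
    _ ≤ ‖z‖ * ‖h‖ := le_rfl

lemma rowOp_eq_adjoint_colOp [CompleteSpace H] (z : EuclideanSpace ℂ (Fin d)) :
    rowOp (H := H) z = ContinuousLinearMap.adjoint (colOp z) := by
  rw [ContinuousLinearMap.eq_adjoint_iff]
  intro g h
  rw [rowOp_apply, sum_inner]
  rw [PiLp.inner_apply]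
  refine Finset.sum_congr rfl fun j _ => ?_
  rw [colOp_apply, inner_smul_left, inner_smul_right]

end helpers

/-- Let `H(b)` be the de Branges–Rovnyak space of a Schur multiplier `b`, with
point evaluations `k_z^b`, and let `X` be a row contraction on `H(b)`.  Then `X` solves the
Gleason problem (`Σ z_j (X_j^* f)(z) = f(z) - f(0)`) if and only if
`(1 - Xz^*)⁻¹ k₀^b = k_z^b` for all `z ∈ 𝔹^d`. -/
theorem stmt_15 {d : ℕ} {J K Hb : Type*}
    [NormedAddCommGroup J] [InnerProductSpace ℂ J] [CompleteSpace J]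
    [NormedAddCommGroup K] [InnerProductSpace ℂ K] [CompleteSpace K]
    [NormedAddCommGroup Hb] [InnerProductSpace ℂ Hb] [CompleteSpace Hb]
    (b : EuclideanSpace ℂ (Fin d) → (J →L[ℂ] K))
    (kb : EuclideanSpace ℂ (Fin d) → (K →L[ℂ] Hb))
    (hker : ∀ z w : EuclideanSpace ℂ (Fin d), ‖z‖ < 1 → ‖w‖ < 1 →
      (adjoint (kb z)) ∘L kb w
        = (1 - ⟪w, z⟫_ℂ)⁻¹ • ((1 : K →L[ℂ] K) - (b z) ∘L adjoint (b w)))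
    (hspan : (⨆ z : {z : EuclideanSpace ℂ (Fin d) // ‖z‖ < 1},
        LinearMap.range (kb z.1 : K →ₗ[ℂ] Hb)).topologicalClosure = ⊤)
    (X : PiLp 2 (fun _ : Fin d => Hb) →L[ℂ] Hb) (hX : ‖X‖ ≤ 1) :
    (∀ z : EuclideanSpace ℂ (Fin d), ‖z‖ < 1 → ∀ f : Hb,
        ∑ j, z j • ((adjoint (kb z)) (((adjoint X) f) j))
          = (adjoint (kb z)) f - (adjoint (kb 0)) f)
    ↔ (∀ z : EuclideanSpace ℂ (Fin d), ‖z‖ < 1 →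
        (Ring.inverse (1 - X ∘L colOp z) : Hb →L[ℂ] Hb) ∘L kb 0 = kb z) := by
  refine forall₂_congr fun z hz => ?_
  set T : Hb →L[ℂ] Hb := X ∘L colOp z with hT_def
  have hTnorm : ‖T‖ < 1 := by
    calc ‖T‖ ≤ ‖X‖ * ‖colOp (H := Hb) z‖ := ContinuousLinearMap.opNorm_comp_le _ _
      _ ≤ 1 * ‖z‖ := by
          exact mul_le_mul hX (norm_colOp_le z) (ContinuousLinearMap.opNorm_nonneg _) zero_le_one
      _ = ‖z‖ := one_mul _
      _ < 1 := hz
  set u : (Hb →L[ℂ] Hb)ˣ := Units.oneSub T hTnorm with hu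
  have hval : (u : Hb →L[ℂ] Hb) = 1 - T := rfl
  have hRi : (Ring.inverse (1 - T) : Hb →L[ℂ] Hb) = (↑u⁻¹ : Hb →L[ℂ] Hb) := by
    rw [← hval, Ring.inverse_unit]
  have e1 : (↑u : Hb →L[ℂ] Hb) ∘L (↑u⁻¹ : Hb →L[ℂ] Hb) = 1 := u.mul_inv
  have e2 : (↑u⁻¹ : Hb →L[ℂ] Hb) ∘L (↑u : Hb →L[ℂ] Hb) = 1 := u.inv_mul
  have hptw : ∀ f : Hb, adjoint (T ∘L kb z) f
      = ∑ j, z j • ((adjoint (kb z)) (((adjoint X) f) j)) := by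
    intro f
    rw [hT_def, adjoint_comp, adjoint_comp, ← rowOp_eq_adjoint_colOp]
    simp only [ContinuousLinearMap.comp_apply, rowOp_apply, map_sum, map_smul]
  have step1 : (∀ f : Hb, ∑ j, z j • ((adjoint (kb z)) (((adjoint X) f) j))
      = adjoint (kb z) f - adjoint (kb 0) f) ↔ T ∘L kb z = kb z - kb 0 := by
    constructor
    · intro h
      apply ContinuousLinearMap.adjoint.injective
      ext f
      rw [hptw f, h f]
      simp [map_sub]
    · intro h f
      rw [← hptw f, h]
      simp [map_sub]
  rw [step1, hRi]
  constructor
  · intro hkey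
    have h0 : (↑u : Hb →L[ℂ] Hb) ∘L kb z = kb 0 := by
      rw [hval, ContinuousLinearMap.sub_comp, hkey, ContinuousLinearMap.one_def,
        ContinuousLinearMap.id_comp, sub_sub_cancel]
    rw [← h0, ← ContinuousLinearMap.comp_assoc, e2, ContinuousLinearMap.one_def,
      ContinuousLinearMap.id_comp]
  · intro hinv
    have h0 : (↑u : Hb →L[ℂ] Hb) ∘L kb z = kb 0 := by
      rw [← hinv, ← ContinuousLinearMap.comp_assoc, e1, ContinuousLinearMap.one_def,
        ContinuousLinearMap.id_comp]
    rw [hval, ContinuousLinearMap.sub_comp, ContinuousLinearMap.one_def,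
      ContinuousLinearMap.id_comp] at h0
    rw [eq_sub_iff_add_eq, ← h0]
    abel

end
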